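/- The monomial Z_1 Z_2 ··· Z_r has nonzero coefficient in the polynomial P(Z_1,...,Z_r) = Π_{i=1}^r (Σ_{j≠i} Z_j − n_i) over the rационals, for every r ≥ 2 and all integers n_1, ..., n_r; in fact this coefficient equals the permanent-like count of systems of distinct representatives, which is positive. -/

import Mathlib

open Finset MvPolynomial

private lemma prod_X_eq_monomial' {r : ℕ} (s : Finset (Fin r)) (x : Fin r → Fin r) :
    ∏ i ∈ s, (X (x i) : MvPolynomial (Fin r) ℚ) =
      monomial (∑ i ∈ s, Finsupp.single (x i) 1) 1 := by
  classical
  induction s using Finset.induction with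
  | empty => simp [monomial_zero']
  | insert _ _ h ih =>
    rw [Finset.prod_insert h, Finset.sum_insert h, ih, X, monomial_mul, one_mul]

theorem coeff_of_product_monomial_pos (r : ℕ) (hr : 2 ≤ r) (n : Fin r → ℤ) :
    0 < MvPolynomial.coeff (∑ i : Fin r, Finsupp.single i 1)
      (∏ i : Fin r,
        ((∑ j ∈ Finset.univ.erase i, (MvPolynomial.X j : MvPolynomial (Fin r) ℚ)) -
          MvPolynomial.C (n i : ℚ))) := by
  classical
  set m : Fin r →₀ ℕ := ∑ i : Fin r, Finsupp.single i 1 with hm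
  have hmi : ∀ i : Fin r, m i = 1 := by
    intro i
    simp [hm, Finsupp.finset_sum_apply, Finsupp.single_apply]
  have hmsupp : m.support = Finset.univ := by
    ext i; simp [Finsupp.mem_support_iff, hmi i]
  have hmsum : ∑ i ∈ m.support, m i = r := by
    rw [hmsupp]
    simp [hmi]
  set L : Fin r → MvPolynomial (Fin r) ℚ := fun i => ∑ j ∈ Finset.univ.erase i, X j with hL
  -- totalDegree of products of L over subsets
  have hLdeg : ∀ i : Fin r, (L i).totalDegree ≤ 1 := by
    intro i
    refine MvPolynomial.totalDegree_finsetSum_le ?_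
    intro j _
    exact le_of_eq (totalDegree_X j)
  have hprodLdeg : ∀ t : Finset (Fin r), (∏ i ∈ t, L i).totalDegree ≤ t.card := by
    intro t
    calc (∏ i ∈ t, L i).totalDegree ≤ ∑ i ∈ t, (L i).totalDegree :=
          totalDegree_finset_prod t L
      _ ≤ ∑ _i ∈ t, 1 := Finset.sum_le_sum fun i _ => hLdeg i
      _ = t.card := by simp
  -- Step 1: drop the constants
  have hstep1 :
      coeff m (∏ i : Fin r, (L i - C (n i : ℚ))) = coeff m (∏ i : Fin r, L i) := by
    have : ∀ i : Fin r, L i - C (n i : ℚ) = L i + C (-(n i : ℚ)) := by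
      intro i; rw [map_neg]; ring
    simp_rw [this]
    rw [Finset.prod_add]
    rw [coeff_sum]
    rw [Finset.sum_eq_single_of_mem (Finset.univ : Finset (Fin r))
      (Finset.mem_powerset_self _)]
    · simp
    · intro t ht hne
      have htcard : t.card < r := by
        have hsub : t ⊆ Finset.univ := Finset.mem_powerset.mp ht
        have := Finset.card_lt_card (lt_of_le_of_ne hsub hne)
        simpa using this
      have : (∏ i ∈ t, L i * 1).totalDegree < r := by
        simp only [mul_one]
        exact lt_of_le_of_lt (hprodLdeg t) htcard
      rw [Finset.prod_congr rfl (fun i _ => rfl : ∀ i ∈ Finset.univ \ t, C (-(n i : ℚ)) = C (-(n i : ℚ)))]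
      rw [← map_prod]
      rw [mul_comm, coeff_C_mul]
      have hdeg : (∏ i ∈ t, L i).totalDegree < ∑ i ∈ m.support, m i := by
        rw [hmsum]; exact lt_of_le_of_lt (hprodLdeg t) htcard
      rw [coeff_eq_zero_of_totalDegree_lt hdeg, mul_zero]
  rw [hstep1, hL]
  -- Step 2: expand product of sums
  rw [Finset.prod_univ_sum]
  rw [coeff_sum]
  simp_rw [prod_X_eq_monomial', coeff_monomial]
  -- positivity
  obtain ⟨s, rfl⟩ : ∃ s, r = s + 2 := ⟨r - 2, by omega⟩
  have hwmem : (fun i : Fin (s + 2) => finRotate (s + 2) i) ∈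
      Fintype.piFinset (fun i : Fin (s + 2) => Finset.univ.erase i) := by
    rw [Fintype.mem_piFinset]
    intro i
    rw [Finset.mem_erase]
    refine ⟨?_, Finset.mem_univ _⟩
    rw [finRotate_succ_apply]
    intro h
    have : (1 : Fin (s + 2)) = 0 := by
      have := congrArg (fun x => x - i) h
      simp at this
    exact one_ne_zero this
  refine Finset.sum_pos' (fun x _ => by positivity) ⟨_, hwmem, ?_⟩
  have hkey : ∑ i : Fin (s + 2), Finsupp.single (finRotate (s + 2) i) 1 = m := by
    rw [hm]
    exact Equiv.sum_comp (finRotate (s + 2)) (fun j => Finsupp.single j (1 : ℕ))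
  rw [if_pos hkey]
  norm_num
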